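/- Every triangle-regular colored graph G is vertex triangle-regular: any two vertices of the same color are contained in the same multiset of colored triangles. -/

import Mathlib

open MvPolynomial SimpleGraph
open scoped Classical

/-- The vertex colors are disjoint from the edge colors. -/
def ColorsDisjoint {V : Type*} (G : SimpleGraph V) (vcol : V → ℕ) (ecol : Sym2 V → ℕ) : Prop :=
  ∀ v : V, ∀ e ∈ G.edgeSet, vcol v ≠ ecol e

/-- The multiset of colors of the edges incident to a vertex. -/
noncomputable def vertexStar {V : Type*} [Fintype V] (G : SimpleGraph V)
    (ecol : Sym2 V → ℕ) (v : V) : Multiset ℕ :=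
  (Finset.univ.filter fun w => G.Adj v w).val.map fun w => ecol s(v, w)

/-- Vertex-regular: any two vertices of the same color are incident with the same
multiset of colored edges. -/
def VertexRegular {V : Type*} [Fintype V] (G : SimpleGraph V) (vcol : V → ℕ)
    (ecol : Sym2 V → ℕ) : Prop :=
  ∀ u v : V, vcol u = vcol v → vertexStar G ecol u = vertexStar G ecol v

/-- Edge-regular: any two edges of the same color are incident with the same
multiset of colored vertices. -/
def EdgeRegular {V : Type*} (G : SimpleGraph V) (vcol : V → ℕ) (ecol : Sym2 V → ℕ) : Prop :=
  ∀ i j i' j' : V, G.Adj i j → G.Adj i' j' → ecol s(i, j) = ecol s(i', j') →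
    s(vcol i, vcol j) = s(vcol i', vcol j')

/-- The multiset of colored triangles containing a given edge {i,j}: for each common
neighbor w of i and j, the color of w together with the unordered pair of colors of
the two other edges of the triangle. -/
noncomputable def edgeTriangles {V : Type*} [Fintype V] (G : SimpleGraph V)
    (vcol : V → ℕ) (ecol : Sym2 V → ℕ) (i j : V) : Multiset (ℕ × Sym2 ℕ) :=
  (Finset.univ.filter fun w => G.Adj i w ∧ G.Adj j w).val.map
    fun w => (vcol w, s(ecol s(i, w), ecol s(j, w)))

/-- Edge triangle-regular: any two edges of the same color are contained in the same
multiset of colored triangles. -/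
def EdgeTriangleRegular {V : Type*} [Fintype V] (G : SimpleGraph V) (vcol : V → ℕ)
    (ecol : Sym2 V → ℕ) : Prop :=
  ∀ i j i' j' : V, G.Adj i j → G.Adj i' j' → ecol s(i, j) = ecol s(i', j') →
    edgeTriangles G vcol ecol i j = edgeTriangles G vcol ecol i' j'

/-- Triangle-regular: vertex-regular, edge-regular and edge triangle-regular. -/
def TriangleRegular {V : Type*} [Fintype V] (G : SimpleGraph V) (vcol : V → ℕ)
    (ecol : Sym2 V → ℕ) : Prop :=
  VertexRegular G vcol ecol ∧ EdgeRegular G vcol ecol ∧ EdgeTriangleRegular G vcol ecol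

/-- The multiset of colored triangles containing a given vertex u: for each pair of
adjacent neighbors of u, the unordered pair of (vertex color, connecting edge color)
data together with the color of the opposite edge.  (Each triangle is counted twice,
once for each orientation, so equality of these multisets is equality of the
multisets of colored triangles.) -/
noncomputable def vertexTriangles {V : Type*} [Fintype V] (G : SimpleGraph V)
    (vcol : V → ℕ) (ecol : Sym2 V → ℕ) (u : V) : Multiset (Sym2 (ℕ × ℕ) × ℕ) :=
  (Finset.univ.filter fun p : V × V => G.Adj u p.1 ∧ G.Adj u p.2 ∧ G.Adj p.1 p.2).val.map
    fun p => (s((vcol p.1, ecol s(u, p.1)), (vcol p.2, ecol s(u, p.2))), ecol s(p.1, p.2))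

section Aux

variable {V : Type*} [Fintype V] (G : SimpleGraph V) (vcol : V → ℕ) (ecol : Sym2 V → ℕ)

lemma card_filter_prod {α : Type*} [Fintype α] (P : α → Prop) (Q : α → α → Prop) :
    (Finset.univ.filter fun x : α × α => P x.1 ∧ Q x.1 x.2).card
      = ∑ p ∈ Finset.univ.filter P, (Finset.univ.filter fun q => Q p q).card := by
  rw [Finset.card_eq_sum_card_fiberwise (f := Prod.fst) (t := Finset.univ.filter P)
      (fun x hx => by simp only [Finset.mem_coe, Finset.mem_filter, Finset.mem_univ, true_and] at hx ⊢; exact hx.1)]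
  refine Finset.sum_congr rfl fun p hp => ?_
  refine Finset.card_bij (fun x _ => x.2) ?_ ?_ ?_
  · rintro ⟨a, b⟩ hx
    simp only [Finset.mem_filter, Finset.mem_univ, true_and] at hx ⊢
    obtain ⟨⟨h1, h2⟩, h3⟩ := hx
    subst h3
    exact h2
  · rintro ⟨a, b⟩ ha ⟨c, d⟩ hc h
    simp only [Finset.mem_filter] at ha hc
    simp only at h
    subst h
    rw [ha.2, hc.2]
  · intro q hq
    simp only [Finset.mem_filter, Finset.mem_univ, true_and] at hq hp ⊢
    exact ⟨(p, q), ⟨⟨hp, hq⟩, rfl⟩, rfl⟩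


/-- the set of neighbors of `u` joined by an edge of color `c` -/
noncomputable def Nbr (u : V) (c : ℕ) : Finset V :=
  Finset.univ.filter fun p => G.Adj u p ∧ ecol s(u, p) = c

lemma count_vertexStar (u : V) (c : ℕ) :
    Multiset.count c (vertexStar G ecol u) = (Nbr G ecol u c).card := by
  rw [vertexStar, Multiset.count_map, ← Finset.filter_val, Finset.filter_filter]
  rw [Nbr, Finset.card_def]
  congr 2
  apply Finset.filter_congr
  intro x _
  exact ⟨fun ⟨h1, h2⟩ => ⟨h1, h2.symm⟩, fun ⟨h1, h2⟩ => ⟨h1, h2.symm⟩⟩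

lemma Nbr_card_eq (hv : VertexRegular G vcol ecol) {u v : V} (huv : vcol u = vcol v) (c : ℕ) :
    (Nbr G ecol u c).card = (Nbr G ecol v c).card := by
  rw [← count_vertexStar, ← count_vertexStar, hv u v huv]

lemma nbr_vcol (her : EdgeRegular G vcol ecol) {u p v q : V} (h : G.Adj u p) (h' : G.Adj v q)
    (huv : vcol u = vcol v) (he : ecol s(u, p) = ecol s(v, q)) : vcol p = vcol q := by
  have h2 := her u p v q h h' he
  rw [huv] at h2
  rcases Sym2.eq_iff.mp h2 with ⟨_, h2⟩ | ⟨h1, h2⟩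
  · exact h2
  · exact h2.trans h1

/-- count of common neighbors `w` of `i j` whose colored-triangle entry satisfies `p` -/
noncomputable def cntE (i j : V) (p : ℕ × Sym2 ℕ → Prop) : ℕ :=
  (Finset.univ.filter fun w =>
    (G.Adj i w ∧ G.Adj j w) ∧ p (vcol w, s(ecol s(i, w), ecol s(j, w)))).card

lemma cntE_eq (het : EdgeTriangleRegular G vcol ecol) {i j i' j' : V} (h : G.Adj i j)
    (h' : G.Adj i' j') (he : ecol s(i, j) = ecol s(i', j')) (p : ℕ × Sym2 ℕ → Prop) :
    cntE G vcol ecol i j p = cntE G vcol ecol i' j' p := by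
  have h2 := congrArg (Multiset.countP p) (het i j i' j' h h' he)
  rw [edgeTriangles, edgeTriangles, Multiset.countP_map, Multiset.countP_map] at h2
  have key : ∀ a b : V,
      Multiset.filter (fun w => (G.Adj a w ∧ G.Adj b w) ∧
          p (vcol w, s(ecol s(a, w), ecol s(b, w)))) Finset.univ.val
        = Multiset.filter (fun w => p (vcol w, s(ecol s(a, w), ecol s(b, w))) ∧
            G.Adj a w ∧ G.Adj b w) Finset.univ.val :=
    fun a b => Multiset.filter_congr fun x _ => and_comm
  rw [Finset.filter_val, Finset.filter_val, Multiset.filter_filter, Multiset.filter_filter] at h2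
  rw [cntE, cntE, Finset.card_def, Finset.card_def, Finset.filter_val, Finset.filter_val, key, key]
  exact h2

end Aux

section Aux2

variable {V : Type*} [Fintype V] (G : SimpleGraph V) (vcol : V → ℕ) (ecol : Sym2 V → ℕ)

lemma cardf_congr {α β : Type*} [Fintype α] [Fintype β] {p : α → Prop} {q : β → Prop}
    {ip : DecidablePred p} {iq : DecidablePred q} (e : α ≃ β) (h : ∀ x, p x ↔ q (e x)) :
    (@Finset.filter _ p ip Finset.univ).card = (@Finset.filter _ q iq Finset.univ).card := by
  haveI := ip; haveI := iq
  refine Finset.card_bij (fun a _ => e a) ?_ ?_ ?_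
  · intro a ha
    simp only [Finset.mem_filter, Finset.mem_univ, true_and] at ha ⊢
    exact (h a).mp ha
  · intro a _ b _ hab
    exact e.injective hab
  · intro b hb
    simp only [Finset.mem_filter, Finset.mem_univ, true_and] at hb ⊢
    exact ⟨e.symm b, (h _).mpr (by simpa using hb), by simp⟩

lemma cardf_iff {α : Type*} [Fintype α] {p q : α → Prop}
    {ip : DecidablePred p} {iq : DecidablePred q} (h : ∀ x, p x ↔ q x) :
    (@Finset.filter _ p ip Finset.univ).card = (@Finset.filter _ q iq Finset.univ).card :=
  cardf_congr (Equiv.refl α) h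

lemma cardf_or {α : Type*} [Fintype α] {p q r : α → Prop}
    {ip : DecidablePred p} {iq : DecidablePred q} {ir : DecidablePred r}
    (hr : ∀ x, r x ↔ (p x ∨ q x)) (h : ∀ x, ¬(p x ∧ q x)) :
    (@Finset.filter _ r ir Finset.univ).card
      = (@Finset.filter _ p ip Finset.univ).card + (@Finset.filter _ q iq Finset.univ).card := by
  have h1 : (@Finset.filter _ r ir Finset.univ).card
      = (Finset.univ.filter fun x => p x ∨ q x).card := cardf_iff hr
  have h2 : (@Finset.filter _ p ip Finset.univ).card
      = (Finset.univ.filter p).card := cardf_iff fun _ => Iff.rfl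
  have h3 : (@Finset.filter _ q iq Finset.univ).card
      = (Finset.univ.filter q).card := cardf_iff fun _ => Iff.rfl
  rw [h1, h2, h3]
  have huni : (Finset.univ.filter fun x => p x ∨ q x)
      = (Finset.univ.filter p) ∪ (Finset.univ.filter q) := by
    ext x
    simp only [Finset.mem_filter, Finset.mem_union, Finset.mem_univ, true_and]
  rw [huni]
  refine Finset.card_union_of_disjoint (Finset.disjoint_left.mpr ?_)
  intro a ha hb
  simp only [Finset.mem_filter] at ha hb
  exact h a ⟨ha.2, hb.2⟩

lemma cardf_prod0 {α : Type*} [Fintype α] (P : α → Prop) (Q : α → α → Prop) :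
    (Finset.univ.filter fun x : α × α => P x.1 ∧ Q x.1 x.2).card
      = ∑ p ∈ Finset.univ.filter P, (Finset.univ.filter fun q => Q p q).card := by
  rw [Finset.card_eq_sum_card_fiberwise (f := Prod.fst) (t := Finset.univ.filter P)
      (fun x hx => by simp only [Finset.mem_coe, Finset.mem_filter, Finset.mem_univ, true_and] at hx ⊢; exact hx.1)]
  refine Finset.sum_congr rfl fun p hp => ?_
  refine Finset.card_bij (fun x _ => x.2) ?_ ?_ ?_
  · rintro ⟨a, b⟩ hx
    simp only [Finset.mem_filter, Finset.mem_univ, true_and] at hx ⊢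
    obtain ⟨⟨h1, h2⟩, h3⟩ := hx
    subst h3
    exact h2
  · rintro ⟨a, b⟩ ha ⟨c, d⟩ hc h
    simp only [Finset.mem_filter] at ha hc
    simp only at h
    subst h
    rw [ha.2, hc.2]
  · intro q hq
    simp only [Finset.mem_filter, Finset.mem_univ, true_and] at hq hp ⊢
    exact ⟨(p, q), ⟨⟨hp, hq⟩, rfl⟩, rfl⟩

lemma cardf_prod {α : Type*} [Fintype α] {R : α × α → Prop} {iR : DecidablePred R}
    (P : α → Prop) (Q : α → α → Prop) {iP : DecidablePred P} {iQ : ∀ p, DecidablePred (Q p)}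
    (hR : ∀ x, R x ↔ P x.1 ∧ Q x.1 x.2) :
    (@Finset.filter _ R iR Finset.univ).card
      = ∑ p ∈ @Finset.filter _ P iP Finset.univ,
          (@Finset.filter _ (fun q => Q p q) (iQ p) Finset.univ).card := by
  have h1 : (@Finset.filter _ R iR Finset.univ).card
      = (Finset.univ.filter fun x : α × α => P x.1 ∧ Q x.1 x.2).card := cardf_iff hR
  rw [h1]
  rw [Finset.card_eq_sum_card_fiberwise (f := Prod.fst) (t := Finset.univ.filter P)
      (fun x hx => by simp only [Finset.mem_coe, Finset.mem_filter, Finset.mem_univ, true_and] at hx ⊢; exact hx.1)]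
  refine Finset.sum_congr rfl fun p hp => ?_
  refine Finset.card_bij (fun x _ => x.2) ?_ ?_ ?_
  · rintro ⟨a, b⟩ hx
    simp only [Finset.mem_filter, Finset.mem_univ, true_and] at hx ⊢
    obtain ⟨⟨h1, h2⟩, h3⟩ := hx
    subst h3
    exact h2
  · rintro ⟨a, b⟩ ha ⟨c, d⟩ hc h
    simp only [Finset.mem_filter] at ha hc
    simp only at h
    subst h
    rw [ha.2, hc.2]
  · intro q hq
    simp only [Finset.mem_filter, Finset.mem_univ, true_and] at hq hp ⊢
    exact ⟨(p, q), ⟨⟨hp, hq⟩, rfl⟩, rfl⟩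

noncomputable def Dcnt (u p : V) (β γ : ℕ) : ℕ :=
  (Finset.univ.filter fun w =>
    (G.Adj u w ∧ G.Adj p w) ∧ ecol s(u, w) = β ∧ ecol s(p, w) = γ).card

noncomputable def Wcnt (u : V) (c : ℕ) (σ : Sym2 ℕ) : ℕ :=
  ∑ p ∈ Nbr G ecol u c, cntE G vcol ecol u p (fun e => e.2 = σ)

noncomputable def Acnt (u : V) (α β γ : ℕ) : ℕ :=
  (Finset.univ.filter fun x : V × V =>
    (G.Adj u x.1 ∧ ecol s(u, x.1) = α) ∧
    (G.Adj u x.2 ∧ G.Adj x.1 x.2) ∧ ecol s(u, x.2) = β ∧ ecol s(x.1, x.2) = γ).card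

lemma Acnt_eq_sum (u : V) (α β γ : ℕ) :
    Acnt G ecol u α β γ = ∑ p ∈ Nbr G ecol u α, Dcnt G ecol u p β γ := by
  rw [Acnt, Nbr]
  exact cardf_prod (fun p => G.Adj u p ∧ ecol s(u, p) = α)
    (fun p q => (G.Adj u q ∧ G.Adj p q) ∧ ecol s(u, q) = β ∧ ecol s(p, q) = γ)
    (fun x => Iff.rfl)

lemma cnt_split (u p : V) {β γ : ℕ} (hβγ : β ≠ γ) :
    cntE G vcol ecol u p (fun e => e.2 = s(β, γ))
      = Dcnt G ecol u p β γ + Dcnt G ecol u p γ β := by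
  rw [cntE, Dcnt, Dcnt]
  refine cardf_or (fun w => ?_) (fun w => ?_)
  · show (_ ∧ (vcol w, s(ecol s(u, w), ecol s(p, w))).2 = s(β, γ)) ↔ _
    simp only
    rw [Sym2.eq_iff]
    tauto
  · rintro ⟨⟨_, h1⟩, ⟨_, h2⟩⟩
    exact hβγ (h1.1.symm.trans h2.1)

lemma cnt_diag (u p : V) (β : ℕ) :
    cntE G vcol ecol u p (fun e => e.2 = s(β, β)) = Dcnt G ecol u p β β := by
  rw [cntE, Dcnt]
  refine cardf_iff (fun w => ?_)
  show (_ ∧ (vcol w, s(ecol s(u, w), ecol s(p, w))).2 = s(β, β)) ↔ _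
  simp only
  rw [Sym2.eq_iff]
  tauto

lemma W_split (u : V) (α : ℕ) {β γ : ℕ} (hβγ : β ≠ γ) :
    Wcnt G vcol ecol u α s(β, γ) = Acnt G ecol u α β γ + Acnt G ecol u α γ β := by
  rw [Acnt_eq_sum, Acnt_eq_sum, Wcnt, ← Finset.sum_add_distrib]
  exact Finset.sum_congr rfl fun p _ => cnt_split G vcol ecol u p hβγ

lemma W_diag (u : V) (α β : ℕ) :
    Wcnt G vcol ecol u α s(β, β) = Acnt G ecol u α β β := by
  rw [Acnt_eq_sum, Wcnt]
  exact Finset.sum_congr rfl fun p _ => cnt_diag G vcol ecol u p β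

lemma Wcnt_eq (hv : VertexRegular G vcol ecol) (het : EdgeTriangleRegular G vcol ecol)
    {u v : V} (huv : vcol u = vcol v) (c : ℕ) (σ : Sym2 ℕ) :
    Wcnt G vcol ecol u c σ = Wcnt G vcol ecol v c σ := by
  have hcard := Nbr_card_eq G vcol ecol hv huv c
  by_cases hn : (Nbr G ecol v c).Nonempty
  · obtain ⟨q0, hq0⟩ := hn
    have hq0' := hq0
    simp only [Nbr, Finset.mem_filter, Finset.mem_univ, true_and] at hq0'
    have hu : ∀ p ∈ Nbr G ecol u c, cntE G vcol ecol u p (fun e => e.2 = σ)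
        = cntE G vcol ecol v q0 (fun e => e.2 = σ) := by
      intro p hp
      simp only [Nbr, Finset.mem_filter, Finset.mem_univ, true_and] at hp
      exact cntE_eq G vcol ecol het hp.1 hq0'.1 (hp.2.trans hq0'.2.symm) _
    have hvv : ∀ q ∈ Nbr G ecol v c, cntE G vcol ecol v q (fun e => e.2 = σ)
        = cntE G vcol ecol v q0 (fun e => e.2 = σ) := by
      intro q hq
      simp only [Nbr, Finset.mem_filter, Finset.mem_univ, true_and] at hq
      exact cntE_eq G vcol ecol het hq.1 hq0'.1 (hq.2.trans hq0'.2.symm) _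
    rw [Wcnt, Wcnt, Finset.sum_congr rfl hu, Finset.sum_congr rfl hvv,
      Finset.sum_const, Finset.sum_const, hcard]
  · rw [Finset.not_nonempty_iff_eq_empty] at hn
    rw [hn, Finset.card_empty, Finset.card_eq_zero] at hcard
    rw [Wcnt, Wcnt, hn, hcard, Finset.sum_empty, Finset.sum_empty]

end Aux2

section Aux3

variable {V : Type*} [Fintype V] (G : SimpleGraph V) (vcol : V → ℕ) (ecol : Sym2 V → ℕ)

lemma Acnt_swap (u : V) (α β γ : ℕ) :
    Acnt G ecol u α β γ = Acnt G ecol u β α γ := by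
  rw [Acnt, Acnt]
  refine cardf_congr (Equiv.prodComm V V) (fun x => ?_)
  constructor
  · rintro ⟨⟨h1, h2⟩, ⟨h3, h4⟩, h5, h6⟩
    exact ⟨⟨h3, h5⟩, ⟨h1, h4.symm⟩, h2, by rwa [Sym2.eq_swap]⟩
  · rintro ⟨⟨h1, h2⟩, ⟨h3, h4⟩, h5, h6⟩
    exact ⟨⟨h3, h5⟩, ⟨h1, h4.symm⟩, h2, by rwa [Sym2.eq_swap]⟩

lemma Acnt_eq (hv : VertexRegular G vcol ecol) (het : EdgeTriangleRegular G vcol ecol)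
    {u v : V} (huv : vcol u = vcol v) (c1 c2 c3 : ℕ) :
    Acnt G ecol u c1 c2 c3 = Acnt G ecol v c1 c2 c3 := by
  by_cases h23 : c2 = c3
  · subst h23
    rw [← W_diag G vcol ecol u c1 c2, ← W_diag G vcol ecol v c1 c2]
    exact Wcnt_eq G vcol ecol hv het huv c1 s(c2, c2)
  by_cases h12 : c1 = c2
  · subst h12
    have hu1 := W_split G vcol ecol u c1 h23
    have hv1 := W_split G vcol ecol v c1 h23
    have hu2 : Acnt G ecol u c1 c3 c1 = Wcnt G vcol ecol u c3 s(c1, c1) := by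
      rw [Acnt_swap, ← W_diag]
    have hv2 : Acnt G ecol v c1 c3 c1 = Wcnt G vcol ecol v c3 s(c1, c1) := by
      rw [Acnt_swap, ← W_diag]
    have e1 := Wcnt_eq G vcol ecol hv het huv c1 s(c1, c3)
    have e3 := Wcnt_eq G vcol ecol hv het huv c3 s(c1, c1)
    omega
  by_cases h13 : c1 = c3
  · subst h13
    rw [Acnt_swap G ecol u, Acnt_swap G ecol v, ← W_diag, ← W_diag]
    exact Wcnt_eq G vcol ecol hv het huv c2 s(c1, c1)
  · have hu1 := W_split G vcol ecol u c1 h23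
    have hv1 := W_split G vcol ecol v c1 h23
    have hu2 := W_split G vcol ecol u c2 h13
    have hv2 := W_split G vcol ecol v c2 h13
    have hu3 := W_split G vcol ecol u c3 h12
    have hv3 := W_split G vcol ecol v c3 h12
    have su2a : Acnt G ecol u c2 c1 c3 = Acnt G ecol u c1 c2 c3 := Acnt_swap G ecol u c2 c1 c3
    have sv2a : Acnt G ecol v c2 c1 c3 = Acnt G ecol v c1 c2 c3 := Acnt_swap G ecol v c2 c1 c3
    have su3a : Acnt G ecol u c3 c1 c2 = Acnt G ecol u c1 c3 c2 := Acnt_swap G ecol u c3 c1 c2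
    have sv3a : Acnt G ecol v c3 c1 c2 = Acnt G ecol v c1 c3 c2 := Acnt_swap G ecol v c3 c1 c2
    have su3b : Acnt G ecol u c3 c2 c1 = Acnt G ecol u c2 c3 c1 := Acnt_swap G ecol u c3 c2 c1
    have sv3b : Acnt G ecol v c3 c2 c1 = Acnt G ecol v c2 c3 c1 := Acnt_swap G ecol v c3 c2 c1
    have e1 := Wcnt_eq G vcol ecol hv het huv c1 s(c2, c3)
    have e2 := Wcnt_eq G vcol ecol hv het huv c2 s(c1, c3)
    have e3 := Wcnt_eq G vcol ecol hv het huv c3 s(c1, c2)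
    omega

end Aux3

section Aux4

variable {V : Type*} [Fintype V] (G : SimpleGraph V) (vcol : V → ℕ) (ecol : Sym2 V → ℕ)

noncomputable def Pcnt (u : V) (d1 c1 d2 c2 c3 : ℕ) : ℕ :=
  (Finset.univ.filter fun x : V × V =>
    (G.Adj u x.1 ∧ G.Adj u x.2 ∧ G.Adj x.1 x.2) ∧
    ((d1, c1) = (vcol x.1, ecol s(u, x.1)) ∧ (d2, c2) = (vcol x.2, ecol s(u, x.2))) ∧
    c3 = ecol s(x.1, x.2)).card

lemma support_transfer (hv : VertexRegular G vcol ecol) (her : EdgeRegular G vcol ecol)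
    {u v : V} (huv : vcol u = vcol v) {c d : ℕ}
    (h : ∃ p, G.Adj u p ∧ ecol s(u, p) = c ∧ vcol p = d) :
    ∃ q, G.Adj v q ∧ ecol s(v, q) = c ∧ vcol q = d := by
  obtain ⟨p, hp1, hp2, hp3⟩ := h
  have hne : (Nbr G ecol u c).Nonempty :=
    ⟨p, by simp only [Nbr, Finset.mem_filter, Finset.mem_univ, true_and]; exact ⟨hp1, hp2⟩⟩
  have hne' : (Nbr G ecol v c).Nonempty := by
    rw [← Finset.card_pos, ← Nbr_card_eq G vcol ecol hv huv c, Finset.card_pos]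
    exact hne
  obtain ⟨q, hq⟩ := hne'
  simp only [Nbr, Finset.mem_filter, Finset.mem_univ, true_and] at hq
  exact ⟨q, hq.1, hq.2,
    (nbr_vcol G vcol ecol her hq.1 hp1 huv.symm (hq.2.trans hp2.symm)).trans hp3⟩

lemma Pcnt_eq (hv : VertexRegular G vcol ecol) (her : EdgeRegular G vcol ecol)
    (het : EdgeTriangleRegular G vcol ecol) {u v : V} (huv : vcol u = vcol v)
    (d1 c1 d2 c2 c3 : ℕ) :
    Pcnt G vcol ecol u d1 c1 d2 c2 c3 = Pcnt G vcol ecol v d1 c1 d2 c2 c3 := by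
  by_cases h1 : ∃ p, G.Adj u p ∧ ecol s(u, p) = c1 ∧ vcol p = d1
  · by_cases h2 : ∃ q, G.Adj u q ∧ ecol s(u, q) = c2 ∧ vcol q = d2
    · -- both supported: Pcnt = Acnt on each side
      have key : ∀ w : V, (∃ p, G.Adj w p ∧ ecol s(w, p) = c1 ∧ vcol p = d1) →
          (∃ q, G.Adj w q ∧ ecol s(w, q) = c2 ∧ vcol q = d2) →
          Pcnt G vcol ecol w d1 c1 d2 c2 c3 = Acnt G ecol w c1 c2 c3 := by
        intro w hw1 hw2
        obtain ⟨p, hp1, hp2, hp3⟩ := hw1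
        obtain ⟨q, hq1, hq2, hq3⟩ := hw2
        rw [Pcnt, Acnt]
        refine cardf_iff (fun x => ?_)
        constructor
        · rintro ⟨⟨a1, a2, a3⟩, ⟨e1, e2⟩, e3⟩
          rw [Prod.mk.injEq] at e1 e2
          exact ⟨⟨a1, e1.2.symm⟩, ⟨a2, a3⟩, e2.2.symm, e3.symm⟩
        · rintro ⟨⟨a1, e1⟩, ⟨a2, a3⟩, e2, e3⟩
          have hx1 : vcol x.1 = d1 :=
            (nbr_vcol G vcol ecol her a1 hp1 rfl (e1.trans hp2.symm)).trans hp3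
          have hx2 : vcol x.2 = d2 :=
            (nbr_vcol G vcol ecol her a2 hq1 rfl (e2.trans hq2.symm)).trans hq3
          refine ⟨⟨a1, a2, a3⟩, ⟨?_, ?_⟩, e3.symm⟩
          · rw [Prod.mk.injEq]; exact ⟨hx1.symm, e1.symm⟩
          · rw [Prod.mk.injEq]; exact ⟨hx2.symm, e2.symm⟩
      rw [key u h1 h2, key v (support_transfer G vcol ecol hv her huv h1)
        (support_transfer G vcol ecol hv her huv h2)]
      exact Acnt_eq G vcol ecol hv het huv c1 c2 c3
    · -- (c2, d2) unsupported at u, hence at v as well: both sides are 0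
      have key : ∀ w : V, ¬(∃ q, G.Adj w q ∧ ecol s(w, q) = c2 ∧ vcol q = d2) →
          Pcnt G vcol ecol w d1 c1 d2 c2 c3 = 0 := by
        intro w hw
        rw [Pcnt, Finset.card_eq_zero, Finset.filter_eq_empty_iff]
        rintro x - ⟨⟨a1, a2, a3⟩, ⟨e1, e2⟩, e3⟩
        rw [Prod.mk.injEq] at e2
        exact hw ⟨x.2, a2, e2.2.symm, e2.1.symm⟩
      have h2v : ¬(∃ q, G.Adj v q ∧ ecol s(v, q) = c2 ∧ vcol q = d2) := fun hc =>
        h2 (support_transfer G vcol ecol hv her huv.symm hc)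
      rw [key u h2, key v h2v]
  · have key : ∀ w : V, ¬(∃ p, G.Adj w p ∧ ecol s(w, p) = c1 ∧ vcol p = d1) →
        Pcnt G vcol ecol w d1 c1 d2 c2 c3 = 0 := by
      intro w hw
      rw [Pcnt, Finset.card_eq_zero, Finset.filter_eq_empty_iff]
      rintro x - ⟨⟨a1, a2, a3⟩, ⟨e1, e2⟩, e3⟩
      rw [Prod.mk.injEq] at e1
      exact hw ⟨x.1, a1, e1.2.symm, e1.1.symm⟩
    have h1v : ¬(∃ p, G.Adj v p ∧ ecol s(v, p) = c1 ∧ vcol p = d1) := fun hc =>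
      h1 (support_transfer G vcol ecol hv her huv.symm hc)
    rw [key u h1, key v h1v]

lemma count_vertexTriangles (u : V) (E : Sym2 (ℕ × ℕ) × ℕ) :
    Multiset.count E (vertexTriangles G vcol ecol u)
      = (Finset.univ.filter fun x : V × V =>
          (G.Adj u x.1 ∧ G.Adj u x.2 ∧ G.Adj x.1 x.2) ∧
          E = (s((vcol x.1, ecol s(u, x.1)), (vcol x.2, ecol s(u, x.2))),
            ecol s(x.1, x.2))).card := by
  rw [vertexTriangles, Multiset.count_map, ← Finset.filter_val, Finset.filter_filter]
  rfl

end Aux4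


/-- Lemma 2.11: a triangle-regular colored graph is vertex
triangle-regular. -/
theorem triangleRegular_vertex_triangleRegular {V : Type*} [Fintype V]
    (G : SimpleGraph V) (vcol : V → ℕ) (ecol : Sym2 V → ℕ)
    (hdisj : ColorsDisjoint G vcol ecol)
    (hreg : TriangleRegular G vcol ecol) :
    ∀ u v : V, vcol u = vcol v →
      vertexTriangles G vcol ecol u = vertexTriangles G vcol ecol v := by
  obtain ⟨hv, her, het⟩ := hreg
  intro u v huv
  refine Multiset.ext.mpr fun E => ?_
  obtain ⟨σ, c3⟩ := E
  induction σ using Sym2.ind with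
  | _ a b =>
    obtain ⟨d1, c1⟩ := a
    obtain ⟨d2, c2⟩ := b
    rw [count_vertexTriangles, count_vertexTriangles]
    by_cases hdc : d1 = d2 ∧ c1 = c2
    · obtain ⟨rfl, rfl⟩ := hdc
      have key : ∀ w : V, (Finset.univ.filter fun x : V × V =>
          (G.Adj w x.1 ∧ G.Adj w x.2 ∧ G.Adj x.1 x.2) ∧
          ((s((d1, c1), (d1, c1)), c3) : Sym2 (ℕ × ℕ) × ℕ)
            = (s((vcol x.1, ecol s(w, x.1)), (vcol x.2, ecol s(w, x.2))),
              ecol s(x.1, x.2))).card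
          = Pcnt G vcol ecol w d1 c1 d1 c1 c3 := by
        intro w
        rw [Pcnt]
        refine cardf_iff (fun x => ?_)
        constructor
        · rintro ⟨ha, hE⟩
          rw [Prod.mk.injEq] at hE
          obtain ⟨hs, hc⟩ := hE
          rcases Sym2.eq_iff.mp hs with ⟨hA, hB⟩ | ⟨hA, hB⟩
          · exact ⟨ha, ⟨hA, hB⟩, hc⟩
          · exact ⟨ha, ⟨hB, hA⟩, hc⟩
        · rintro ⟨ha, ⟨hA, hB⟩, hc⟩
          refine ⟨ha, ?_⟩
          rw [Prod.mk.injEq]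
          exact ⟨Sym2.eq_iff.mpr (Or.inl ⟨hA, hB⟩), hc⟩
      rw [key u, key v]
      exact Pcnt_eq G vcol ecol hv her het huv d1 c1 d1 c1 c3
    · have key : ∀ w : V, (Finset.univ.filter fun x : V × V =>
          (G.Adj w x.1 ∧ G.Adj w x.2 ∧ G.Adj x.1 x.2) ∧
          ((s((d1, c1), (d2, c2)), c3) : Sym2 (ℕ × ℕ) × ℕ)
            = (s((vcol x.1, ecol s(w, x.1)), (vcol x.2, ecol s(w, x.2))),
              ecol s(x.1, x.2))).card
          = Pcnt G vcol ecol w d1 c1 d2 c2 c3 + Pcnt G vcol ecol w d2 c2 d1 c1 c3 := by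
        intro w
        rw [Pcnt, Pcnt]
        refine cardf_or (fun x => ?_) (fun x => ?_)
        · constructor
          · rintro ⟨ha, hE⟩
            rw [Prod.mk.injEq] at hE
            obtain ⟨hs, hc⟩ := hE
            rcases Sym2.eq_iff.mp hs with ⟨hA, hB⟩ | ⟨hA, hB⟩
            · exact Or.inl ⟨ha, ⟨hA, hB⟩, hc⟩
            · exact Or.inr ⟨ha, ⟨hB, hA⟩, hc⟩
          · rintro (⟨ha, ⟨hA, hB⟩, hc⟩ | ⟨ha, ⟨hA, hB⟩, hc⟩)
            · exact ⟨ha, by rw [Prod.mk.injEq]; exact ⟨Sym2.eq_iff.mpr (Or.inl ⟨hA, hB⟩), hc⟩⟩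
            · exact ⟨ha, by rw [Prod.mk.injEq]; exact ⟨Sym2.eq_iff.mpr (Or.inr ⟨hB, hA⟩), hc⟩⟩
        · rintro ⟨⟨_, ⟨hA, hB⟩, _⟩, ⟨_, ⟨hA', hB'⟩, _⟩⟩
          have h1 := hA.trans hA'.symm
          rw [Prod.mk.injEq] at h1
          exact hdc ⟨h1.1, h1.2⟩
      rw [key u, key v, Pcnt_eq G vcol ecol hv her het huv d1 c1 d2 c2 c3,
        Pcnt_eq G vcol ecol hv her het huv d2 c2 d1 c1 c3]
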